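/- arXiv:2506.15434 — 2 statements merged into one kernel-verified Lean document; each statement's English description precedes it below -/
import Mathlib

section
/- Let g : ℝ² → ℝ be a smooth compactly supported function and c := exp∘g. Then ∫_{ℝ²} c⁻² |∇c|² Δc dx = 2∫_{ℝ²} c⁻³ |∇c|⁴ dx − 2∫_{ℝ²} c⁻² ⟨D²c ∇c, ∇c⟩ dx, where ⟨D²c ∇c, ∇c⟩ = Σ_{i,j} (∂²_{ij}c)(∂_i c)(∂_j c). -/
open MeasureTheory Real

noncomputable section

/-- The plane `ℝ²` as a Euclidean space. -/
abbrev E2 : Type := EuclideanSpace ℝ (Fin 2)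

/-- `i`-th partial derivative of a scalar function on `ℝ²`. -/
def pd (i : Fin 2) (f : E2 → ℝ) (x : E2) : ℝ :=
  fderiv ℝ f x (EuclideanSpace.single i 1)

/-- Laplacian `Δf = ∑ i, ∂_i ∂_i f`. -/
def lap (f : E2 → ℝ) (x : E2) : ℝ := ∑ i, pd i (pd i f) x

/-- `|∇f|² = ∑ i, (∂_i f)²`. -/
def gradSq (f : E2 → ℝ) (x : E2) : ℝ := ∑ i, (pd i f x) ^ 2

/-- Squared Frobenius norm of the Hessian: `|D²f|² = ∑ i j, (∂²_{ij} f)²`. -/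
def hessSq (f : E2 → ℝ) (x : E2) : ℝ := ∑ i, ∑ j, (pd i (pd j f) x) ^ 2

/-- `⟨D²f ∇f, ∇f⟩ = ∑ i j, (∂²_{ij} f)(∂_i f)(∂_j f)`. -/
def hessGrad (f : E2 → ℝ) (x : E2) : ℝ :=
  ∑ i, ∑ j, pd i (pd j f) x * pd i f x * pd j f x

end

noncomputable def M2 : ℝ × ℝ →L[ℝ] E2 :=
  ((ContinuousLinearMap.fst ℝ ℝ ℝ).smulRight (EuclideanSpace.single (0 : Fin 2) (1:ℝ))) +
  ((ContinuousLinearMap.snd ℝ ℝ ℝ).smulRight (EuclideanSpace.single (1 : Fin 2) (1:ℝ)))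

lemma M2_apply (p : ℝ × ℝ) (j : Fin 2) : M2 p j = ![p.1, p.2] j := by
  fin_cases j <;> simp [M2, EuclideanSpace.single_apply]

noncomputable def psi2 : (ℝ × ℝ) ≃ᵐ E2 :=
  MeasurableEquiv.finTwoArrow.symm.trans (MeasurableEquiv.toLp 2 (Fin 2 → ℝ))

lemma psi2_eq : ⇑psi2 = ⇑M2 := by
  funext p
  have h1 : (psi2 p : Fin 2 → ℝ) = ![p.1, p.2] := by
    simp [psi2, MeasurableEquiv.finTwoArrow, finTwoArrowEquiv, MeasurableEquiv.toLp,
      Matrix.range_cons_cons_empty]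
    rfl
  ext j
  rw [M2_apply]
  exact congrFun h1 j

lemma psi2_mp : MeasurePreserving (⇑psi2) (volume : Measure (ℝ × ℝ)) volume := by
  have h1 := (EuclideanSpace.volume_preserving_symm_measurableEquiv_toLp (Fin 2)).symm
  have h2 := (volume_preserving_finTwoArrow ℝ).symm
  exact h1.comp h2

lemma integral_M2 (F : E2 → ℝ) : ∫ x : E2, F x = ∫ p : ℝ × ℝ, F (M2 p) := by
  rw [← psi2_mp.integral_comp' F, psi2_eq]

lemma slice_fst {w : ℝ × ℝ → ℝ} (hw : HasCompactSupport w) (y : ℝ) :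
    HasCompactSupport (fun t => w (t, y)) := by
  apply HasCompactSupport.intro (hw.image continuous_fst)
  intro t ht
  by_contra h
  exact ht ⟨(t, y), subset_tsupport _ (Function.mem_support.2 h), rfl⟩

lemma slice_snd {w : ℝ × ℝ → ℝ} (hw : HasCompactSupport w) (x : ℝ) :
    HasCompactSupport (fun t => w (x, t)) := by
  apply HasCompactSupport.intro (hw.image continuous_snd)
  intro t ht
  by_contra h
  exact ht ⟨(x, t), subset_tsupport _ (Function.mem_support.2 h), rfl⟩

lemma comp_M2_hcs {w : E2 → ℝ} (hw : HasCompactSupport w) :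
    HasCompactSupport (fun p => w (M2 p)) := by
  have hcont : Continuous (fun x : E2 => ((x : Fin 2 → ℝ) 0, (x : Fin 2 → ℝ) 1)) := by
    exact ((EuclideanSpace.proj (0 : Fin 2) : E2 →L[ℝ] ℝ).continuous.prodMk
      (EuclideanSpace.proj (1 : Fin 2) : E2 →L[ℝ] ℝ).continuous)
  apply HasCompactSupport.intro (hw.image hcont)
  intro p hp
  by_contra h
  refine hp ⟨M2 p, subset_tsupport _ (Function.mem_support.2 h), ?_⟩
  have h0 := M2_apply p 0
  have h1 := M2_apply p 1
  simp at h0 h1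
  simp [EuclideanSpace.proj]  -- maybe not needed
  exact Prod.ext h0 h1

lemma pd_contDiff {f : E2 → ℝ} (hf : ContDiff ℝ (⊤ : ℕ∞) f) (i : Fin 2) :
    ContDiff ℝ (⊤ : ℕ∞) (pd i f) :=
  (hf.fderiv_right (by exact_mod_cast le_top)).clm_apply contDiff_const

lemma pd_hcs {f : E2 → ℝ} (hf : HasCompactSupport f) (i : Fin 2) :
    HasCompactSupport (pd i f) :=
  hf.fderiv_apply ℝ (EuclideanSpace.single i 1)

lemma integral_pd_eq_zero (u : E2 → ℝ) (hu : ContDiff ℝ (⊤ : ℕ∞) u)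
    (hsupp : HasCompactSupport u) (i : Fin 2) :
    ∫ x : E2, pd i u x = 0 := by
  have hud : Differentiable ℝ u := hu.differentiable (by simp)
  have hpc : Continuous (pd i u) := (pd_contDiff hu i).continuous
  have hps : HasCompactSupport (pd i u) := pd_hcs hsupp i
  have hcomp_cs : HasCompactSupport (fun p : ℝ × ℝ => pd i u (M2 p)) := comp_M2_hcs hps
  have hucs : HasCompactSupport (fun p : ℝ × ℝ => u (M2 p)) := comp_M2_hcs hsupp
  have hInt : Integrable (fun p : ℝ × ℝ => pd i u (M2 p)) :=
    ((hpc.comp M2.continuous).integrable_of_hasCompactSupport hcomp_cs)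
  rw [integral_M2]
  fin_cases i
  · rw [Measure.volume_eq_prod, integral_prod_symm _ (by rwa [← Measure.volume_eq_prod])]
    have hinner : ∀ y : ℝ, ∫ x : ℝ, pd 0 u (M2 (x, y)) = 0 := by
      intro y
      have hline : ∀ t : ℝ, HasDerivAt (fun s : ℝ => u (M2 (s, y))) (pd 0 u (M2 (t, y))) t := by
        intro t
        have h2 : HasDerivAt (fun s : ℝ => M2 (s, y)) (M2 (1, 0)) t := by
          have heq : (fun s : ℝ => M2 (s, y)) = fun s => s • M2 (1, 0) + M2 (0, y) := by
            funext s
            rw [← M2.map_smul, ← M2.map_add]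
            congr 1
            simp [Prod.ext_iff]
          rw [heq]
          simpa using ((hasDerivAt_id t).smul_const (M2 (1, 0))).add_const (M2 (0, y))
        have h1 := (hud (M2 (t, y))).hasFDerivAt.comp_hasDerivAt t h2
        have he : M2 ((1:ℝ), (0:ℝ)) = EuclideanSpace.single (0 : Fin 2) (1:ℝ) := by
          ext j; rw [M2_apply]; fin_cases j <;> simp [EuclideanSpace.single_apply]
        simpa [pd, he, Function.comp_def] using h1
      apply integral_eq_zero_of_hasDerivAt_of_integrable hline
      · exact ((hpc.comp (M2.continuous.comp
          (continuous_id.prodMk continuous_const))).integrable_of_hasCompactSupport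
          (slice_fst hcomp_cs y))
      · exact ((hu.continuous.comp (M2.continuous.comp
          (continuous_id.prodMk continuous_const))).integrable_of_hasCompactSupport
          (slice_fst hucs y))
    simp [hinner]
  · rw [Measure.volume_eq_prod, integral_prod _ (by rwa [← Measure.volume_eq_prod])]
    have hinner : ∀ x : ℝ, ∫ y : ℝ, pd 1 u (M2 (x, y)) = 0 := by
      intro x
      have hline : ∀ t : ℝ, HasDerivAt (fun s : ℝ => u (M2 (x, s))) (pd 1 u (M2 (x, t))) t := by
        intro t
        have h2 : HasDerivAt (fun s : ℝ => M2 (x, s)) (M2 (0, 1)) t := by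
          have heq : (fun s : ℝ => M2 (x, s)) = fun s => s • M2 (0, 1) + M2 (x, 0) := by
            funext s
            rw [← M2.map_smul, ← M2.map_add]
            congr 1
            simp [Prod.ext_iff]
          rw [heq]
          simpa using ((hasDerivAt_id t).smul_const (M2 (0, 1))).add_const (M2 (x, 0))
        have h1 := (hud (M2 (x, t))).hasFDerivAt.comp_hasDerivAt t h2
        have he : M2 ((0:ℝ), (1:ℝ)) = EuclideanSpace.single (1 : Fin 2) (1:ℝ) := by
          ext j; rw [M2_apply]; fin_cases j <;> simp [EuclideanSpace.single_apply]
        simpa [pd, he, Function.comp_def] using h1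
      apply integral_eq_zero_of_hasDerivAt_of_integrable hline
      · exact ((hpc.comp (M2.continuous.comp
          (continuous_const.prodMk continuous_id))).integrable_of_hasCompactSupport
          (slice_snd hcomp_cs x))
      · exact ((hu.continuous.comp (M2.continuous.comp
          (continuous_const.prodMk continuous_id))).integrable_of_hasCompactSupport
          (slice_snd hucs x))
    simp [hinner]

lemma pd_mul {f g : E2 → ℝ} {x : E2} (i : Fin 2) (hf : DifferentiableAt ℝ f x)
    (hg : DifferentiableAt ℝ g x) :
    pd i (fun y => f y * g y) x = pd i f x * g x + f x * pd i g x := by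
  unfold pd
  rw [fderiv_fun_mul hf hg]
  simp
  ring

lemma pd_sum (F : Fin 2 → E2 → ℝ) {x : E2} (i : Fin 2)
    (h : ∀ j, DifferentiableAt ℝ (F j) x) :
    pd i (fun y => ∑ j, F j y) x = ∑ j, pd i (F j) x := by
  unfold pd
  rw [fderiv_fun_sum (fun j _ => h j)]
  simp

lemma pd_sq {f : E2 → ℝ} {x : E2} (i : Fin 2) (hf : DifferentiableAt ℝ f x) :
    pd i (fun y => f y ^ 2) x = 2 * f x * pd i f x := by
  have h : (fun y => f y ^ 2) = fun y => f y * f y := by funext y; ring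
  rw [h, pd_mul i hf hf]; ring

lemma pd_inv {f : E2 → ℝ} {x : E2} (i : Fin 2) (hf : DifferentiableAt ℝ f x)
    (h0 : f x ≠ 0) :
    pd i (fun y => (f y)⁻¹) x = -pd i f x / f x ^ 2 := by
  have h := (hasDerivAt_inv h0).comp_hasFDerivAt x hf.hasFDerivAt
  have h2 : HasFDerivAt (fun y => (f y)⁻¹) ((-(f x ^ 2)⁻¹) • fderiv ℝ f x) x := h
  unfold pd
  rw [h2.fderiv]
  simp [div_eq_mul_inv]
  ring


/-- Equation (3.7): for `c = exp ∘ g` with `g` smooth and compactly supported,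
`∫ c⁻² |∇c|² Δc = 2 ∫ c⁻³ |∇c|⁴ − 2 ∫ c⁻² ⟨D²c ∇c, ∇c⟩`. -/
theorem stmt2 (g : E2 → ℝ) (hg : ContDiff ℝ (⊤ : ℕ∞) g) (hgc : HasCompactSupport g)
    (c : E2 → ℝ) (hc : c = fun x => Real.exp (g x)) :
    ∫ x : E2, gradSq c x * lap c x / (c x) ^ 2
      = 2 * (∫ x : E2, (gradSq c x) ^ 2 / (c x) ^ 3)
        - 2 * ∫ x : E2, hessGrad c x / (c x) ^ 2 := by
  -- basic facts about c
  have hc' : ContDiff ℝ (⊤ : ℕ∞) c := by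
    rw [hc]; exact Real.contDiff_exp.comp hg
  have hpos : ∀ x, 0 < c x := by intro x; rw [hc]; exact Real.exp_pos _
  have hne : ∀ x, c x ≠ 0 := fun x => (hpos x).ne'
  have hcd : Differentiable ℝ c := hc'.differentiable (by simp)
  -- compact support of the partial derivatives of c
  have hcs1 : HasCompactSupport (fun x => c x - 1) := by
    have h : (fun x => c x - 1) = (fun t => Real.exp t - 1) ∘ g := by rw [hc]; rfl
    rw [h]; exact hgc.comp_left (by simp)
  have hpdcs : ∀ i, HasCompactSupport (pd i c) := by
    intro i
    have h : pd i c = pd i (fun x => c x - 1) := by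
      funext x; unfold pd; rw [fderiv_sub_const]
    rw [h]; exact pd_hcs hcs1 i
  -- smoothness of derivatives
  have hD : ∀ j, ContDiff ℝ (⊤ : ℕ∞) (pd j c) := fun j => pd_contDiff hc' j
  have hDd : ∀ j (x : E2), DifferentiableAt ℝ (pd j c) x :=
    fun j x => ((hD j).differentiable (by simp)) x
  have hG : ContDiff ℝ (⊤ : ℕ∞) (fun x => gradSq c x) := by
    have : (fun x => gradSq c x) = fun x => ∑ j : Fin 2, (pd j c x) ^ 2 := rfl
    rw [this]
    exact ContDiff.sum fun j _ => (hD j).pow 2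
  have hGd : ∀ x : E2, DifferentiableAt ℝ (fun y => gradSq c y) x :=
    fun x => (hG.differentiable (by simp)) x
  have hW : ContDiff ℝ (⊤ : ℕ∞) (fun x => ((c x) ^ 2)⁻¹) :=
    (hc'.pow 2).inv fun x => pow_ne_zero 2 (hne x)
  have hWd : ∀ x : E2, DifferentiableAt ℝ (fun y => ((c y) ^ 2)⁻¹) x :=
    fun x => (hW.differentiable (by simp)) x
  -- the vector field
  set U : Fin 2 → E2 → ℝ := fun i x => gradSq c x * pd i c x * ((c x) ^ 2)⁻¹ with hU
  have hUc : ∀ i, ContDiff ℝ (⊤ : ℕ∞) (U i) := fun i => (hG.mul (hD i)).mul hW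
  have hUcs : ∀ i, HasCompactSupport (U i) := by
    intro i
    apply (hpdcs i).mono'
    intro x hx
    apply subset_tsupport
    intro h0
    apply hx
    simp [hU, h0]
  -- pointwise divergence identity
  have key : ∀ x : E2, (∑ i, pd i (U i) x)
      = gradSq c x * lap c x / (c x) ^ 2 + 2 * (hessGrad c x / (c x) ^ 2)
        - 2 * ((gradSq c x) ^ 2 / (c x) ^ 3) := by
    intro x
    have hGr : ∀ i, pd i (fun y => gradSq c y) x = ∑ j, 2 * pd j c x * pd i (pd j c) x := by
      intro i
      have h : (fun y => gradSq c y) = fun y => ∑ j : Fin 2, (fun j y => (pd j c y) ^ 2) j y := rfl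
      rw [h, pd_sum _ i (fun j => (hDd j x).fun_pow 2)]
      exact Finset.sum_congr rfl fun j _ => pd_sq i (hDd j x)
    have hWr : pd (0:Fin 2) (fun y => ((c y) ^ 2)⁻¹) x
        = -(2 * c x * pd 0 c x) / ((c x) ^ 2) ^ 2 := by
      rw [pd_inv 0 ((hcd x).fun_pow 2) (pow_ne_zero 2 (hne x)), pd_sq 0 (hcd x)]
    have hWr1 : pd (1:Fin 2) (fun y => ((c y) ^ 2)⁻¹) x
        = -(2 * c x * pd 1 c x) / ((c x) ^ 2) ^ 2 := by
      rw [pd_inv 1 ((hcd x).fun_pow 2) (pow_ne_zero 2 (hne x)), pd_sq 1 (hcd x)]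
    have hstep : ∀ i, pd i (U i) x
        = ((∑ j, 2 * pd j c x * pd i (pd j c) x) * pd i c x + gradSq c x * pd i (pd i c) x)
            * ((c x) ^ 2)⁻¹
          + gradSq c x * pd i c x * pd i (fun y => ((c y) ^ 2)⁻¹) x := by
      intro i
      have h : U i = fun y => (fun y => gradSq c y * pd i c y) y * (fun y => ((c y) ^ 2)⁻¹) y := rfl
      rw [h, pd_mul i ((hGd x).fun_mul (hDd i x)) (hWd x),
        pd_mul i (hGd x) (hDd i x), hGr i]
    have he : c x ≠ 0 := hne x
    rw [Fin.sum_univ_two, hstep 0, hstep 1, hWr, hWr1]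
    simp only [gradSq, lap, hessGrad, Fin.sum_univ_two]
    field_simp
    ring
  -- integrability
  have hCont2 : ∀ i j, Continuous (pd i (pd j c)) := fun i j => (pd_contDiff (hD j) i).continuous
  have hGcont : Continuous (fun x => gradSq c x) := hG.continuous
  have hlapcont : Continuous (fun x => lap c x) := by
    have h : (fun x => lap c x) = fun x => ∑ i : Fin 2, pd i (pd i c) x := rfl
    rw [h]; exact continuous_finset_sum _ fun i _ => hCont2 i i
  have hhgcont : Continuous (fun x => hessGrad c x) := by
    have h : (fun x => hessGrad c x)
        = fun x => ∑ i : Fin 2, ∑ j : Fin 2, pd i (pd j c) x * pd i c x * pd j c x := rfl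
    rw [h]
    exact continuous_finset_sum _ fun i _ => continuous_finset_sum _ fun j _ =>
      ((hCont2 i j).mul (hD i).continuous).mul (hD j).continuous
  have hGcs : HasCompactSupport (fun x => gradSq c x) := by
    apply HasCompactSupport.intro ((hpdcs 0).union (hpdcs 1))
    intro x hx
    simp only [Set.mem_union, not_or] at hx
    have h0 : pd 0 c x = 0 := image_eq_zero_of_notMem_tsupport hx.1
    have h1 : pd 1 c x = 0 := image_eq_zero_of_notMem_tsupport hx.2
    simp [gradSq, Fin.sum_univ_two, h0, h1]
  have hGzero : ∀ x : E2, gradSq c x = 0 → ∀ j, pd j c x = 0 := by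
    intro x hx j
    have h := (Finset.sum_eq_zero_iff_of_nonneg
      (fun j _ => sq_nonneg (pd j c x))).1 hx j (Finset.mem_univ j)
    exact (pow_eq_zero_iff (by norm_num : (2:ℕ) ≠ 0)).1 h
  have hA : Integrable (fun x : E2 => gradSq c x * lap c x / (c x) ^ 2) := by
    apply Continuous.integrable_of_hasCompactSupport
    · exact (hGcont.mul hlapcont).div (hc'.continuous.pow 2) fun x => pow_ne_zero 2 (hne x)
    · apply hGcs.mono'
      intro x hx
      apply subset_tsupport
      intro h0
      exact hx (by simp [h0])
  have hQ : Integrable (fun x : E2 => (gradSq c x) ^ 2 / (c x) ^ 3) := by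
    apply Continuous.integrable_of_hasCompactSupport
    · exact (hGcont.pow 2).div (hc'.continuous.pow 3) fun x => pow_ne_zero 3 (hne x)
    · apply hGcs.mono'
      intro x hx
      apply subset_tsupport
      intro h0
      exact hx (by simp [h0])
  have hR : Integrable (fun x : E2 => hessGrad c x / (c x) ^ 2) := by
    apply Continuous.integrable_of_hasCompactSupport
    · exact hhgcont.div (hc'.continuous.pow 2) fun x => pow_ne_zero 2 (hne x)
    · apply hGcs.mono'
      intro x hx
      apply subset_tsupport
      intro h0
      have hz : ∀ j, pd j c x = 0 := hGzero x h0
      apply hx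
      simp [hessGrad, Fin.sum_univ_two, hz 0, hz 1]
  have hUint : ∀ i, Integrable (fun x => pd i (U i) x) := fun i =>
    (pd_contDiff (hUc i) i).continuous.integrable_of_hasCompactSupport (pd_hcs (hUcs i) i)
  -- divergence integral is zero
  have h0 : ∫ x : E2, ∑ i, pd i (U i) x = 0 := by
    rw [integral_finset_sum _ fun i _ => hUint i]
    apply Finset.sum_eq_zero
    intro i _
    exact integral_pd_eq_zero (U i) (hUc i) (hUcs i) i
  rw [show (fun x : E2 => ∑ i, pd i (U i) x)
      = fun x : E2 => gradSq c x * lap c x / (c x) ^ 2 + 2 * (hessGrad c x / (c x) ^ 2)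
        - 2 * ((gradSq c x) ^ 2 / (c x) ^ 3) from funext key] at h0
  have hsum : Integrable (fun x : E2 => gradSq c x * lap c x / (c x) ^ 2
      + 2 * (hessGrad c x / (c x) ^ 2)) := hA.add (hR.const_mul 2)
  rw [integral_sub hsum (hQ.const_mul 2)] at h0
  rw [integral_add hA (hR.const_mul 2)] at h0
  rw [integral_const_mul, integral_const_mul] at h0
  linarith
end

section
/- There exists a constant C > 0 (independent of n) such that for every smooth compactly supported function n : ℝ² → ℝ with n ≥ 0 everywhere, one has ‖n‖_{L²(ℝ²)} ≤ C (1 + ‖∇√(n+1)‖_{L²(ℝ²)}) ‖n‖_{L¹(ℝ²)}^{1/2}, where √(n+1) denotes the function x ↦ √(n(x)+1) (which is smooth since n+1 ≥ 1, and whose gradient is compactly supported). -/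
open MeasureTheory Real
open scoped NNReal ENNReal

lemma dual_sum_sq (L : E2 →L[ℝ] ℝ) :
    ∑ i, (L (EuclideanSpace.single i 1)) ^ 2 = ‖L‖ ^ 2 := by
  set v := (InnerProductSpace.toDual ℝ E2).symm L with hv
  have h1 : ∀ x : E2, inner ℝ v x = L x := fun x => InnerProductSpace.toDual_symm_apply
  have h2 : ‖v‖ = ‖L‖ := (InnerProductSpace.toDual ℝ E2).symm.norm_map L
  have h3 : ∀ i, L (EuclideanSpace.single i 1) = v i := by
    intro i; rw [← h1, EuclideanSpace.inner_single_right]; simp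
  have h4 : ‖v‖ ^ 2 = ∑ i, (v i) ^ 2 := by
    rw [EuclideanSpace.norm_eq, Real.sq_sqrt (by positivity)]
    simp [sq_abs]
  simp_rw [h3, ← h2, h4]


set_option maxHeartbeats 2000000 in
/-- Estimate (3.18): there is a universal constant `C > 0` such that for every smooth
compactly supported `n ≥ 0` on `ℝ²`,
`‖n‖_{L²} ≤ C (1 + ‖∇√(n+1)‖_{L²}) ‖n‖_{L¹}^{1/2}`. -/
theorem stmt13 :
    ∃ C : ℝ, 0 < C ∧
      ∀ n : E2 → ℝ, ContDiff ℝ (⊤ : ℕ∞) n → HasCompactSupport n → (∀ x, 0 ≤ n x) →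
        Real.sqrt (∫ x : E2, (n x) ^ 2)
          ≤ C * (1 + Real.sqrt (∫ x : E2, gradSq (fun y => Real.sqrt (n y + 1)) x))
            * Real.sqrt (∫ x : E2, n x) := by
  set C0 : ℝ≥0 := MeasureTheory.lintegralPowLePowLIntegralFDerivConst
    (volume : Measure E2) 2 with hC0
  set a : ℝ := 144 * (C0 : ℝ) with ha
  have ha0 : 0 ≤ a := by positivity
  refine ⟨1 + Real.sqrt a, by positivity, ?_⟩
  intro n hn hsupp hpos
  set g : E2 → ℝ := fun y => Real.sqrt (n y + 1) with hgdef
  set w : E2 → ℝ := fun x => g x - 1 with hwdef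
  set u : E2 → ℝ := fun x => w x * w x with hudef
  have hpos1 : ∀ x, (0:ℝ) < n x + 1 := fun x => by linarith [hpos x]
  -- smoothness
  have hgc : ContDiff ℝ (⊤ : ℕ∞) g := by
    rw [contDiff_iff_contDiffAt]
    intro x
    exact ContDiffAt.sqrt ((hn.add contDiff_const).contDiffAt) (hpos1 x).ne'
  have hwc : ContDiff ℝ (⊤ : ℕ∞) w := hgc.sub contDiff_const
  have huc : ContDiff ℝ (⊤ : ℕ∞) u := hwc.mul hwc
  -- supports
  have hwsupp : HasCompactSupport w := by
    apply hsupp.mono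
    intro x hx
    simp only [Function.mem_support] at hx ⊢
    intro h0
    apply hx
    simp [hwdef, hgdef, h0]
  have husupp : HasCompactSupport u := by
    apply hwsupp.mono
    intro x hx
    simp only [Function.mem_support] at hx ⊢
    intro h0; apply hx; simp [hudef, h0]
  -- pointwise facts
  have hg1 : ∀ x, (1:ℝ) ≤ g x := by
    intro x
    have h := Real.sqrt_le_sqrt (show (1:ℝ) ≤ n x + 1 by linarith [hpos x])
    simpa [hgdef] using h
  have hgsq : ∀ x, g x ^ 2 = n x + 1 := fun x => Real.sq_sqrt (hpos1 x).le
  have hw0 : ∀ x, 0 ≤ w x := fun x => by simp [hwdef]; linarith [hg1 x]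
  have hw2n : ∀ x, w x ^ 2 ≤ n x := by
    intro x; have := hgsq x; have := hg1 x; simp only [hwdef]; nlinarith
  have key : ∀ x, n x ^ 2 ≤ n x + 36 * w x ^ 4 := by
    intro x
    have h1 := hg1 x
    have h2 := hgsq x
    have h0 := hpos x
    rcases le_or_gt (n x) 1 with h | h
    · have : (0:ℝ) ≤ w x ^ 4 := by positivity
      nlinarith
    · have hs7 : 7 ≤ 5 * g x := by nlinarith
      have h4 : (g x + 1) ^ 2 ≤ 36 * (g x - 1) ^ 2 := by nlinarith
      have h5 : n x ^ 2 = (g x - 1) ^ 2 * (g x + 1) ^ 2 := by nlinarith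
      have h6 : (g x - 1) ^ 2 * (g x + 1) ^ 2 ≤ (g x - 1) ^ 2 * (36 * (g x - 1) ^ 2) :=
        mul_le_mul_of_nonneg_left h4 (sq_nonneg _)
      simp only [hwdef]
      nlinarith
  -- derivatives
  have hwdiff : Differentiable ℝ w := hwc.differentiable (by simp)
  have hdw_eq : ∀ x, fderiv ℝ w x = fderiv ℝ g x := fun x => fderiv_sub_const 1
  have hgrad : ∀ x, gradSq g x = ‖fderiv ℝ w x‖ ^ 2 := by
    intro x
    rw [hdw_eq]
    simp only [gradSq, pd]
    exact dual_sum_sq (fderiv ℝ g x)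
  have hdu : ∀ x, fderiv ℝ u x = w x • fderiv ℝ w x + w x • fderiv ℝ w x := by
    intro x
    exact ((hwdiff x).hasFDerivAt.mul (hwdiff x).hasFDerivAt).fderiv
  have hnormdu : ∀ x, ‖fderiv ℝ u x‖ = 2 * (w x * ‖fderiv ℝ w x‖) := by
    intro x
    rw [hdu x, ← add_smul, norm_smul, Real.norm_eq_abs,
      abs_of_nonneg (by linarith [hw0 x])]
    ring
  -- continuity and integrability
  have hDwcont : Continuous fun x => fderiv ℝ w x := hwc.continuous_fderiv (by simp)
  have hDucont : Continuous fun x => fderiv ℝ u x := huc.continuous_fderiv (by simp)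
  have int_n : Integrable n := hn.continuous.integrable_of_hasCompactSupport hsupp
  have int_n2 : Integrable (fun x => n x ^ 2) :=
    (hn.continuous.pow 2).integrable_of_hasCompactSupport
      (by exact hsupp.comp_left (g := fun t : ℝ => t ^ 2) (by simp))
  have int_w2 : Integrable (fun x => w x ^ 2) :=
    (hwc.continuous.pow 2).integrable_of_hasCompactSupport
      (by exact hwsupp.comp_left (g := fun t : ℝ => t ^ 2) (by simp))
  have int_w4 : Integrable (fun x => w x ^ 4) :=
    (hwc.continuous.pow 4).integrable_of_hasCompactSupport
      (by have h := hwsupp.comp_left (g := fun t : ℝ => t ^ 4) (by simp); simpa only [Function.comp_def, Pi.pow_def] using h)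
  have hDwsupp : HasCompactSupport (fun x => fderiv ℝ w x) := hwsupp.fderiv (𝕜 := ℝ)
  have hDwn : HasCompactSupport (fun x => ‖fderiv ℝ w x‖) :=
    hDwsupp.comp_left (g := fun L : E2 →L[ℝ] ℝ => ‖L‖) (by simp)
  have int_Dw2 : Integrable (fun x => ‖fderiv ℝ w x‖ ^ 2) :=
    (hDwcont.norm.pow 2).integrable_of_hasCompactSupport
      (by have h := hDwn.comp_left (g := fun t : ℝ => t ^ 2) (by simp); simpa only [Function.comp_def, Pi.pow_def] using h)
  have int_Du : Integrable (fun x => ‖fderiv ℝ u x‖) :=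
    hDucont.norm.integrable_of_hasCompactSupport
      ((husupp.fderiv (𝕜 := ℝ)).comp_left (g := fun L : E2 →L[ℝ] ℝ => ‖L‖) (by simp))
  have int_wDw : Integrable (fun x => w x * ‖fderiv ℝ w x‖) :=
    (hwc.continuous.mul hDwcont.norm).integrable_of_hasCompactSupport
      (by
        apply hwsupp.mono
        intro x hx
        simp only [Function.mem_support] at hx ⊢
        intro h0; apply hx; simp [h0])
  -- abbreviations
  set A : ℝ := ∫ x : E2, n x with hA
  set Q : ℝ := ∫ x : E2, n x ^ 2 with hQ
  set W2 : ℝ := ∫ x : E2, w x ^ 2 with hW2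
  set W4 : ℝ := ∫ x : E2, w x ^ 4 with hW4
  set Gr : ℝ := ∫ x : E2, ‖fderiv ℝ w x‖ ^ 2 with hGrdef
  clear_value C0 a A Q W2 W4 Gr
  have hA0 : 0 ≤ A := by rw [hA]; exact integral_nonneg hpos
  have hW20 : 0 ≤ W2 := by rw [hW2]; exact integral_nonneg fun x => by positivity
  have hGr0 : 0 ≤ Gr := by rw [hGrdef]; exact integral_nonneg fun x => by positivity
  -- Hölder
  have hconj2 : Real.HolderConjugate 2 2 := Real.HolderConjugate.two_two
  have hold := integral_mul_le_Lp_mul_Lq_of_nonneg (μ := (volume : Measure E2)) hconj2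
    (f := w) (g := fun x => ‖fderiv ℝ w x‖)
    (ae_of_all _ hw0) (ae_of_all _ fun x => norm_nonneg _)
    (hwc.continuous.memLp_of_hasCompactSupport hwsupp)
    (hDwcont.norm.memLp_of_hasCompactSupport hDwn)
  rw [show ((2:ℝ)) = ((2:ℕ):ℝ) by norm_num] at hold
  simp_rw [Real.rpow_natCast] at hold
  rw [show ((1:ℝ)/((2:ℕ):ℝ)) = 1/2 by norm_num, ← Real.sqrt_eq_rpow, ← Real.sqrt_eq_rpow] at hold
  rw [← hW2, ← hGrdef] at hold
  -- hold : ∫ w * ‖Dw‖ ≤ √W2 * √Gr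
  -- Sobolev inequality
  have hconjE : Real.HolderConjugate (Module.finrank ℝ E2) 2 := by
    rw [finrank_euclideanSpace_fin]
    constructor <;> norm_num
  have sob := MeasureTheory.lintegral_pow_le_pow_lintegral_fderiv (volume : Measure E2)
    (huc.of_le (by exact_mod_cast le_top)) husupp hconjE
  have lhs_eq : (∫⁻ x : E2, ‖u x‖ₑ ^ (2:ℝ)) = ENNReal.ofReal W4 := by
    have hptw : ∀ x : E2, ‖u x‖ₑ ^ (2:ℝ) = ENNReal.ofReal (w x ^ 4) := by
      intro x
      rw [← ofReal_norm_eq_enorm,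
        ENNReal.ofReal_rpow_of_nonneg (norm_nonneg _) (by norm_num : (0:ℝ) ≤ 2)]
      congr 1
      rw [Real.norm_of_nonneg (by simpa only [hudef] using mul_self_nonneg (w x)),
        show ((2:ℝ)) = ((2:ℕ):ℝ) by norm_num, Real.rpow_natCast]
      simp only [hudef]; ring
    simp_rw [hptw]
    rw [← ofReal_integral_eq_lintegral_ofReal int_w4 (ae_of_all _ fun x => by positivity), hW4]
  have rhs_eq : (∫⁻ x : E2, ‖fderiv ℝ u x‖ₑ) =
      ENNReal.ofReal (∫ x : E2, ‖fderiv ℝ u x‖) := by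
    rw [ofReal_integral_eq_lintegral_ofReal int_Du (ae_of_all _ fun x => norm_nonneg _)]
    simp_rw [ofReal_norm_eq_enorm]
  rw [lhs_eq, rhs_eq] at sob
  set D1 : ℝ := ∫ x : E2, ‖fderiv ℝ u x‖ with hD1
  have hD10 : 0 ≤ D1 := by rw [hD1]; exact integral_nonneg fun x => norm_nonneg _
  clear_value D1
  have sobR : W4 ≤ (C0 : ℝ) * D1 ^ 2 := by
    rw [hC0]
    rw [ENNReal.ofReal_rpow_of_nonneg hD10 (by norm_num : (0:ℝ) ≤ 2),
      show ((2:ℝ)) = ((2:ℕ):ℝ) by norm_num, Real.rpow_natCast,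
      ← ENNReal.ofReal_coe_nnreal, ← ENNReal.ofReal_mul (by positivity)] at sob
    exact (ENNReal.ofReal_le_ofReal_iff
      (mul_nonneg (NNReal.coe_nonneg _) (sq_nonneg _))).mp sob
  have hD1_eq : D1 = 2 * ∫ x : E2, w x * ‖fderiv ℝ w x‖ := by
    rw [hD1]
    simp_rw [hnormdu]
    rw [integral_const_mul]
  -- combine
  have hH0 : 0 ≤ ∫ x : E2, w x * ‖fderiv ℝ w x‖ :=
    integral_nonneg fun x => mul_nonneg (hw0 x) (norm_nonneg _)
  have hW4le : W4 ≤ 4 * (C0 : ℝ) * W2 * Gr := by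
    have h1 : D1 ≤ 2 * (Real.sqrt W2 * Real.sqrt Gr) := by
      rw [hD1_eq]
      exact mul_le_mul_of_nonneg_left hold (by norm_num)
    have h2 : D1 ^ 2 ≤ 4 * (W2 * Gr) := by
      have hs : (2 * (Real.sqrt W2 * Real.sqrt Gr)) ^ 2 = 4 * (W2 * Gr) := by
        rw [mul_pow, mul_pow, Real.sq_sqrt hW20, Real.sq_sqrt hGr0]; ring
      calc D1 ^ 2 ≤ (2 * (Real.sqrt W2 * Real.sqrt Gr)) ^ 2 := pow_le_pow_left₀ hD10 h1 2
        _ = 4 * (W2 * Gr) := hs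
    calc W4 ≤ (C0:ℝ) * D1 ^ 2 := sobR
      _ ≤ (C0:ℝ) * (4 * (W2 * Gr)) := mul_le_mul_of_nonneg_left h2 C0.coe_nonneg
      _ = 4 * (C0:ℝ) * W2 * Gr := by ring
  have hQle : Q ≤ A + 36 * W4 := by
    rw [hQ, hA, hW4]
    rw [show (∫ x : E2, n x) + 36 * ∫ x : E2, w x ^ 4
        = ∫ x : E2, (n x + 36 * w x ^ 4) by
      rw [integral_add int_n (int_w4.const_mul 36), integral_const_mul]]
    exact integral_mono int_n2 (int_n.add (int_w4.const_mul 36)) key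
  have hW2A : W2 ≤ A := by rw [hW2, hA]; exact integral_mono int_w2 int_n hw2n
  have main : Q ≤ A * (1 + a * Gr) := by
    have e2 : W2 * Gr ≤ A * Gr := mul_le_mul_of_nonneg_right hW2A hGr0
    have e3 : 144 * (C0:ℝ) * (W2 * Gr) ≤ 144 * (C0:ℝ) * (A * Gr) :=
      mul_le_mul_of_nonneg_left e2 (by positivity)
    rw [ha]
    nlinarith [hQle, hW4le, e3]
  -- finish
  have hGreq : (∫ x : E2, gradSq g x) = Gr := by
    rw [hGrdef]
    exact integral_congr_ae (ae_of_all _ hgrad)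
  rw [hGreq]
  have hs1 : Real.sqrt (1 + a * Gr) ≤ (1 + Real.sqrt a) * (1 + Real.sqrt Gr) := by
    have h := Real.sqrt_le_sqrt (show 1 + a * Gr ≤ ((1 + Real.sqrt a) * (1 + Real.sqrt Gr)) ^ 2 by
      nlinarith [Real.sq_sqrt ha0, Real.sq_sqrt hGr0, Real.sqrt_nonneg a, Real.sqrt_nonneg Gr,
        mul_nonneg (Real.sqrt_nonneg a) (Real.sqrt_nonneg Gr)])
    rwa [Real.sqrt_sq (by positivity)] at h
  calc Real.sqrt Q ≤ Real.sqrt (A * (1 + a * Gr)) := Real.sqrt_le_sqrt main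
    _ = Real.sqrt A * Real.sqrt (1 + a * Gr) := Real.sqrt_mul hA0 _
    _ ≤ Real.sqrt A * ((1 + Real.sqrt a) * (1 + Real.sqrt Gr)) :=
        mul_le_mul_of_nonneg_left hs1 (Real.sqrt_nonneg A)
    _ = (1 + Real.sqrt a) * (1 + Real.sqrt Gr) * Real.sqrt A := by ring
end
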